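/- Let 1 ≤ m < n be integers, 0 < s ≤ m, and let μ be a compactly supported Borel probability measure on ℝ^n whose support is contained in an s-Ahlfors regular set. Let ν be a compactly supported Borel probability measure on ℝ^n with supp ν ⊆ supp μ and ν absolutely continuous with respect to μ. Let q ≤ 0. Then for ν-almost every x at which liminf_{r→0⁺} [log ν(B(x,r)) − q log μ(B(x,r))]/log r ≤ m(1−q), one has liminf_{r→0⁺} [log ν∗φ_r^m(x) − q log μ∗φ_r^m(x)]/log r = liminf_{r→0⁺} [log ν(B(x,r)) − q log μ(B(x,r))]/log r. -/

import Mathlib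

open MeasureTheory Metric Set Filter
open scoped NNReal ENNReal Topology

/-- The topological support of a measure. -/
def measureSupport {n : ℕ} (μ : Measure (EuclideanSpace ℝ (Fin n))) :
    Set (EuclideanSpace ℝ (Fin n)) :=
  {x | ∀ U : Set (EuclideanSpace ℝ (Fin n)), IsOpen U → x ∈ U → 0 < μ U}

/-- The convolution `μ∗φ_r^m(x) = ∫ min {1, r^m |x-y|^{-m}} dμ(y)`, with the
integrand equal to `1` when `y = x`. -/
noncomputable def convPhi {n : ℕ} (m : ℕ) (μ : Measure (EuclideanSpace ℝ (Fin n)))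
    (x : EuclideanSpace ℝ (Fin n)) (r : ℝ) : ℝ :=
  ∫ y, (if ‖x - y‖ = 0 then 1 else min 1 (r ^ m / ‖x - y‖ ^ m)) ∂μ

/-- A closed set `F ⊆ ℝ^n` is `s`-Ahlfors regular if there are a Borel measure `λ`
and a constant `1 ≤ C < ∞` with `λ F > 0` and `C⁻¹ r^s ≤ λ(B(x,r)) ≤ C r^s` for all
`x ∈ F` and `0 < r ≤ 1`. -/
def IsAhlforsRegular {n : ℕ} (s : ℝ) (F : Set (EuclideanSpace ℝ (Fin n))) : Prop :=
  IsClosed F ∧ ∃ (lam : Measure (EuclideanSpace ℝ (Fin n))) (C : ℝ), 1 ≤ C ∧ 0 < lam F ∧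
    ∀ x ∈ F, ∀ r : ℝ, 0 < r → r ≤ 1 →
      ENNReal.ofReal (C⁻¹ * r ^ s) ≤ lam (ball x r) ∧ lam (ball x r) ≤ ENNReal.ofReal (C * r ^ s)

/-- `liminf_{r → 0⁺} [log ν∗φ_r^m(x) − q log μ∗φ_r^m(x)] / log r`. -/
noncomputable def alphaConv {n : ℕ} (q : ℝ) (m : ℕ)
    (μ ν : Measure (EuclideanSpace ℝ (Fin n))) (x : EuclideanSpace ℝ (Fin n)) : ℝ :=
  Filter.liminf
    (fun r : ℝ =>
      (Real.log (convPhi m ν x r) - q * Real.log (convPhi m μ x r)) / Real.log r)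
    (𝓝[>] (0 : ℝ))

/-- `liminf_{r → 0⁺} [log ν(B(x,r)) − q log μ(B(x,r))] / log r`. -/
noncomputable def alphaBall {n : ℕ} (q : ℝ)
    (μ ν : Measure (EuclideanSpace ℝ (Fin n))) (x : EuclideanSpace ℝ (Fin n)) : ℝ :=
  Filter.liminf
    (fun r : ℝ =>
      (Real.log (ν (ball x r)).toReal - q * Real.log (μ (ball x r)).toReal) / Real.log r)
    (𝓝[>] (0 : ℝ))


section phi
variable {n : ℕ} (m : ℕ) (x : EuclideanSpace ℝ (Fin n)) (r : ℝ)

lemma phi_meas :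
    Measurable (fun y : EuclideanSpace ℝ (Fin n) =>
      if ‖x - y‖ = 0 then (1:ℝ) else min 1 (r ^ m / ‖x - y‖ ^ m)) := by
  have hnorm : Measurable (fun y : EuclideanSpace ℝ (Fin n) => ‖x - y‖) :=
    (continuous_const.sub continuous_id).norm.measurable
  have hset : MeasurableSet {y : EuclideanSpace ℝ (Fin n) | ‖x - y‖ = 0} :=
    hnorm (measurableSet_singleton 0)
  exact Measurable.ite hset measurable_const
    (measurable_const.min (measurable_const.div (hnorm.pow_const m)))

lemma phi_nonneg (hr : 0 ≤ r) (y : EuclideanSpace ℝ (Fin n)) :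
    0 ≤ (if ‖x - y‖ = 0 then (1:ℝ) else min 1 (r ^ m / ‖x - y‖ ^ m)) := by
  split
  · norm_num
  · exact le_min zero_le_one (by positivity)

lemma phi_le_one (y : EuclideanSpace ℝ (Fin n)) :
    (if ‖x - y‖ = 0 then (1:ℝ) else min 1 (r ^ m / ‖x - y‖ ^ m)) ≤ 1 := by
  split
  · exact le_rfl
  · exact min_le_left _ _

lemma phi_integrable (μ : Measure (EuclideanSpace ℝ (Fin n))) [IsFiniteMeasure μ] (hr : 0 ≤ r) :
    Integrable (fun y : EuclideanSpace ℝ (Fin n) =>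
      if ‖x - y‖ = 0 then (1:ℝ) else min 1 (r ^ m / ‖x - y‖ ^ m)) μ := by
  refine (integrable_const (1:ℝ)).mono' ((phi_meas m x r).aestronglyMeasurable) ?_
  filter_upwards with y
  rw [Real.norm_eq_abs, abs_le]
  exact ⟨by linarith [phi_nonneg m x r hr y], phi_le_one m x r y⟩

end phi

section conv
variable {n : ℕ} (m : ℕ) (μ : Measure (EuclideanSpace ℝ (Fin n))) [IsProbabilityMeasure μ]
  (x : EuclideanSpace ℝ (Fin n)) {r : ℝ}

lemma convPhi_nonneg (hr : 0 ≤ r) : 0 ≤ convPhi m μ x r :=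
  integral_nonneg (phi_nonneg m x r hr)

lemma convPhi_le_one (hr : 0 ≤ r) : convPhi m μ x r ≤ 1 := by
  have := integral_mono (phi_integrable m x r μ hr) (integrable_const 1)
    (fun y => phi_le_one m x r y)
  simpa [integral_const, convPhi] using this

lemma ball_le_convPhi (hr : 0 ≤ r) : (μ (ball x r)).toReal ≤ convPhi m μ x r := by
  have hind : Integrable ((ball x r).indicator (fun _ => (1:ℝ))) μ :=
    (integrable_const (1:ℝ)).indicator measurableSet_ball
  have hle : ∀ y, (ball x r).indicator (fun _ => (1:ℝ)) y ≤
      (if ‖x - y‖ = 0 then (1:ℝ) else min 1 (r ^ m / ‖x - y‖ ^ m)) := by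
    intro y
    by_cases hy : y ∈ ball x r
    · rw [Set.indicator_of_mem hy]
      split
      · exact le_rfl
      · rename_i hxy
        have hd : 0 < ‖x - y‖ := lt_of_le_of_ne (norm_nonneg _) (Ne.symm hxy)
        have hdr : ‖x - y‖ < r := by
          have := mem_ball.mp hy
          rwa [dist_eq_norm, ← norm_sub_rev] at this
        refine le_min le_rfl ((one_le_div (by positivity)).mpr ?_)
        exact pow_le_pow_left₀ hd.le hdr.le m
    · rw [Set.indicator_of_notMem hy]
      exact phi_nonneg m x r hr y
  have := integral_mono hind (phi_integrable m x r μ hr) hle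
  simpa [integral_indicator_const, measurableSet_ball, convPhi, measureReal_def] using this

lemma convPhi_pos {D : ℝ} (hD : 0 < D) (hae : ∀ᵐ y ∂μ, ‖x - y‖ ≤ D)
    (hr : 0 < r) (hrD : r ≤ D) : (r / D) ^ m ≤ convPhi m μ x r := by
  have hconst : Integrable (fun _ : EuclideanSpace ℝ (Fin n) => (r/D)^m) μ := integrable_const _
  have hle : ∀ᵐ y ∂μ, (r/D)^m ≤
      (if ‖x - y‖ = 0 then (1:ℝ) else min 1 (r ^ m / ‖x - y‖ ^ m)) := by
    filter_upwards [hae] with y hy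
    have hrD1 : (r/D)^m ≤ 1 := by
      apply pow_le_one₀ (by positivity)
      rw [div_le_one hD]; exact hrD
    split
    · exact hrD1
    · rename_i hxy
      have hd : 0 < ‖x - y‖ := lt_of_le_of_ne (norm_nonneg _) (Ne.symm hxy)
      refine le_min hrD1 ?_
      rw [div_pow, div_le_div_iff₀ (by positivity) (by positivity)]
      have : ‖x - y‖ ^ m ≤ D ^ m := pow_le_pow_left₀ hd.le hy m
      nlinarith [pow_pos hr m, pow_pos hd m, pow_nonneg hr.le m]
  have := integral_mono_ae hconst (phi_integrable m x r μ hr.le) hle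
  simpa [integral_const, convPhi] using this

lemma convPhi_le_sum (hr : 0 < r) (K : ℕ) :
    convPhi m μ x r ≤ (μ (ball x r)).toReal
      + ∑ k ∈ Finset.range K, (((2:ℝ)^m)⁻¹)^k * (μ (ball x (2^(k+1) * r))).toReal
      + (((2:ℝ)^m)⁻¹)^K := by
  set w : ℝ := ((2:ℝ)^m)⁻¹ with hw
  have hw0 : 0 ≤ w := by positivity
  -- the majorant function
  set g : EuclideanSpace ℝ (Fin n) → ℝ := fun y =>
    (ball x r).indicator (fun _ => (1:ℝ)) y
    + (∑ k ∈ Finset.range K, w^k * (ball x (2^(k+1) * r)).indicator (fun _ => (1:ℝ)) y)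
    + w^K with hg
  have hgint : Integrable g μ := by
    apply Integrable.add
    apply Integrable.add
    · exact (integrable_const (1:ℝ)).indicator measurableSet_ball
    · apply integrable_finset_sum
      intro k _
      exact (((integrable_const (1:ℝ)).indicator measurableSet_ball).const_mul _)
    · exact integrable_const _
  have hle : ∀ y, (if ‖x - y‖ = 0 then (1:ℝ) else min 1 (r ^ m / ‖x - y‖ ^ m)) ≤ g y := by
    intro y
    have hsum_nonneg : 0 ≤ ∑ k ∈ Finset.range K,
        w^k * (ball x (2^(k+1) * r)).indicator (fun _ => (1:ℝ)) y := by
      apply Finset.sum_nonneg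
      intro k _
      exact mul_nonneg (pow_nonneg hw0 k) (Set.indicator_nonneg (fun _ _ => zero_le_one) y)
    by_cases hy : y ∈ ball x r
    · have h1 : (ball x r).indicator (fun _ => (1:ℝ)) y = 1 := Set.indicator_of_mem hy _
      have := phi_le_one m x r y
      simp only [hg]
      rw [h1]
      have hwK : (0:ℝ) ≤ w^K := pow_nonneg hw0 K
      linarith
    · -- r ≤ ‖x - y‖
      have hd0 : r ≤ ‖x - y‖ := by
        by_contra hlt
        push_neg at hlt
        exact hy (by rw [mem_ball, dist_eq_norm, ← norm_sub_rev]; exact hlt)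
      have hdpos : 0 < ‖x - y‖ := lt_of_lt_of_le hr hd0
      have hphi : (if ‖x - y‖ = 0 then (1:ℝ) else min 1 (r ^ m / ‖x - y‖ ^ m))
          = min 1 (r ^ m / ‖x - y‖ ^ m) := by
        rw [if_neg (by positivity)]
      rw [hphi]
      have hind0 : (ball x r).indicator (fun _ => (1:ℝ)) y = 0 := Set.indicator_of_notMem hy _
      have key : ∀ j : ℕ, 2^j * r ≤ ‖x - y‖ → min 1 (r ^ m / ‖x - y‖ ^ m) ≤ w^j := by
        intro j hj
        refine le_trans (min_le_right _ _) ?_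
        have hww : w^j = ((2:ℝ)^(m*j))⁻¹ := by
          rw [hw, ← inv_pow, ← pow_mul, inv_pow]
        rw [hww, div_le_iff₀ (by positivity), inv_mul_eq_div, le_div_iff₀ (by positivity)]
        calc r ^ m * 2 ^ (m * j) = (2^j * r)^m := by
              rw [mul_pow, ← pow_mul, mul_comm j m]; ring
          _ ≤ ‖x - y‖ ^ m := pow_le_pow_left₀ (by positivity) hj m
      by_cases hbig : 2^K * r ≤ ‖x - y‖
      · -- bounded by w^K
        have : min 1 (r ^ m / ‖x - y‖ ^ m) ≤ w^K := key K hbig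
        simp only [hg]
        rw [hind0]
        linarith
      · -- find the dyadic shell
        push_neg at hbig
        have hP0 : 2^(0:ℕ) * r ≤ ‖x - y‖ := by simpa using hd0
        classical
        set k₀ := Nat.findGreatest (fun k => 2^k * r ≤ ‖x - y‖) K with hk₀
        have hk₀P : 2^k₀ * r ≤ ‖x - y‖ :=
          Nat.findGreatest_spec (P := fun k => (2:ℝ)^k * r ≤ ‖x - y‖) (Nat.zero_le K) hP0
        have hk₀lt : k₀ < K := by
          rcases lt_or_eq_of_le (Nat.findGreatest_le (P := fun k => (2:ℝ)^k * r ≤ ‖x - y‖) K) with h | h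
          · exact h
          · exfalso
            have : (2:ℝ)^K * r ≤ ‖x - y‖ := by rw [hk₀, h] at hk₀P; exact hk₀P
            exact absurd this (not_le.mpr hbig)
        have hk₀succ : ¬ (2^(k₀+1) * r ≤ ‖x - y‖) :=
          Nat.findGreatest_is_greatest (P := fun k => (2:ℝ)^k * r ≤ ‖x - y‖)
            (Nat.lt_succ_self k₀) (Nat.succ_le_of_lt hk₀lt)
        push_neg at hk₀succ
        have hymem : y ∈ ball x (2^(k₀+1) * r) := by
          rw [mem_ball, dist_eq_norm, ← norm_sub_rev]; exact hk₀succ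
        have hterm : min 1 (r ^ m / ‖x - y‖ ^ m) ≤ w^k₀ := key k₀ hk₀P
        have hsumge : w^k₀ ≤ ∑ k ∈ Finset.range K,
            w^k * (ball x (2^(k+1) * r)).indicator (fun _ => (1:ℝ)) y := by
          have : w^k₀ * (ball x (2^(k₀+1) * r)).indicator (fun _ => (1:ℝ)) y = w^k₀ := by
            rw [Set.indicator_of_mem hymem]; ring
          rw [← this]
          apply Finset.single_le_sum (f := fun k => w^k * (ball x (2^(k+1) * r)).indicator (fun _ => (1:ℝ)) y)
          · intro k _
            exact mul_nonneg (pow_nonneg hw0 k) (Set.indicator_nonneg (fun _ _ => zero_le_one) y)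
          · exact Finset.mem_range.mpr hk₀lt
        simp only [hg]
        rw [hind0]
        have hwK : (0:ℝ) ≤ w^K := pow_nonneg hw0 K
        linarith
  have hInt := integral_mono (phi_integrable m x r μ hr.le) hgint hle
  refine le_trans hInt ?_
  simp only [hg]
  rw [integral_add (by
      apply Integrable.add
      · exact (integrable_const (1:ℝ)).indicator measurableSet_ball
      · apply integrable_finset_sum; intro k _
        exact (((integrable_const (1:ℝ)).indicator measurableSet_ball).const_mul _))
    (integrable_const _),
    integral_add ((integrable_const (1:ℝ)).indicator measurableSet_ball) (by
      apply integrable_finset_sum; intro k _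
      exact (((integrable_const (1:ℝ)).indicator measurableSet_ball).const_mul _)),
    integral_finset_sum _ (fun k _ =>
      (((integrable_const (1:ℝ)).indicator measurableSet_ball).const_mul _))]
  have hterm : ∀ k : ℕ, ∫ a, w^k * (ball x (2^(k+1) * r)).indicator (fun _ => (1:ℝ)) a ∂μ
      = w^k * (μ (ball x (2^(k+1) * r))).toReal := by
    intro k
    rw [integral_const_mul, integral_indicator_const _ measurableSet_ball]
    simp [measureReal_def]
  rw [Finset.sum_congr rfl (fun k _ => hterm k)]
  simp only [integral_indicator_const _ measurableSet_ball, integral_const]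
  simp [measure_univ, measureReal_def]

end conv

section dyadic
variable {n : ℕ} {m : ℕ} {μ : Measure (EuclideanSpace ℝ (Fin n))} [IsProbabilityMeasure μ]
  {x : EuclideanSpace ℝ (Fin n)}

/-- If the balls around `x` satisfy a power bound at scales up to `ρ`, then `convPhi`
satisfies a comparable power bound. -/
lemma convPhi_le_of_ball_bound {b C ρ : ℝ} (hb0 : 0 ≤ b) (hbm : b < m)
    (hC : 1 ≤ C) (hρ0 : 0 < ρ) (hρ1 : ρ ≤ 1)
    (hball : ∀ σ : ℝ, 0 < σ → σ ≤ ρ → (μ (ball x σ)).toReal ≤ C * σ ^ b) :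
    ∃ C' : ℝ, 1 ≤ C' ∧ ∀ r : ℝ, 0 < r → r ≤ ρ →
      convPhi m μ x r ≤ C' * r ^ b := by
  classical
  set τ : ℝ := (2:ℝ) ^ b * ((2:ℝ)^m)⁻¹ with hτ
  have h2b : (0:ℝ) < (2:ℝ) ^ b := Real.rpow_pos_of_pos (by norm_num) b
  have hτ0 : 0 < τ := by positivity
  have hτ1 : τ < 1 := by
    rw [hτ]
    have : ((2:ℝ)^m)⁻¹ = (2:ℝ) ^ (-(m:ℝ)) := by
      rw [← Real.rpow_natCast 2 m, ← Real.rpow_neg (by norm_num)]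
    rw [this, ← Real.rpow_add (by norm_num)]
    apply Real.rpow_lt_one_of_one_lt_of_neg (by norm_num)
    have : b < (m:ℝ) := hbm
    linarith
  refine ⟨C + C * (2:ℝ)^b / (1 - τ) + (2/ρ)^m, ?_, ?_⟩
  · have hτ1' : (0:ℝ) < 1 - τ := by linarith
    have h1 : 0 ≤ C * (2:ℝ)^b / (1 - τ) := div_nonneg (by positivity) hτ1'.le
    have h2 : (0:ℝ) ≤ (2/ρ)^m := by positivity
    linarith
  intro r hr0 hrρ
  have hρr1 : (1:ℝ) ≤ ρ / r := (one_le_div hr0).mpr hrρ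
  have hfl1 : 1 ≤ ⌊ρ/r⌋₊ := Nat.one_le_iff_ne_zero.mpr (by
    rw [Ne, Nat.floor_eq_zero]; push_neg; exact hρr1)
  set K : ℕ := Nat.log 2 ⌊ρ/r⌋₊ with hK
  have h2K : (2:ℝ)^K ≤ ρ / r := by
    have h1 : (2:ℕ)^K ≤ ⌊ρ/r⌋₊ := Nat.pow_log_le_self 2 (by omega)
    calc (2:ℝ)^K = ((2:ℕ)^K : ℕ) := by push_cast; ring
      _ ≤ (⌊ρ/r⌋₊ : ℝ) := by exact_mod_cast h1
      _ ≤ ρ / r := Nat.floor_le (by positivity)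
  have h2K' : ρ / r < (2:ℝ)^(K+1) := by
    have h1 : ⌊ρ/r⌋₊ < 2^(K+1) := Nat.lt_pow_succ_log_self (by norm_num) _
    have h2 : (ρ/r : ℝ) < (⌊ρ/r⌋₊ : ℝ) + 1 := Nat.lt_floor_add_one _
    have h3 : ((⌊ρ/r⌋₊ : ℕ) : ℝ) + 1 ≤ ((2:ℕ)^(K+1) : ℝ) := by
      exact_mod_cast Nat.succ_le_of_lt h1
    calc ρ/r < (⌊ρ/r⌋₊ : ℝ) + 1 := h2
      _ ≤ ((2:ℕ)^(K+1) : ℝ) := h3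
      _ = (2:ℝ)^(K+1) := by push_cast; ring
  have hrb : (0:ℝ) < r ^ b := Real.rpow_pos_of_pos hr0 b
  have key := convPhi_le_sum m μ x hr0 K
  -- bound each piece
  have hterm0 : (μ (ball x r)).toReal ≤ C * r ^ b := hball r hr0 hrρ
  have htermk : ∀ k ∈ Finset.range K,
      (((2:ℝ)^m)⁻¹)^k * (μ (ball x (2^(k+1) * r))).toReal ≤ (C * (2:ℝ)^b * r^b) * τ^k := by
    intro k hk
    rw [Finset.mem_range] at hk
    have hrad0 : (0:ℝ) < 2^(k+1) * r := by positivity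
    have hradρ : (2:ℝ)^(k+1) * r ≤ ρ := by
      have h1 : (2:ℝ)^(k+1) ≤ 2^K := by
        apply pow_le_pow_right₀ (by norm_num)
        omega
      calc (2:ℝ)^(k+1) * r ≤ 2^K * r := by nlinarith
        _ ≤ ρ := by rw [← div_mul_cancel₀ ρ (ne_of_gt hr0)]; nlinarith [h2K]
    have h1 := hball _ hrad0 hradρ
    have h2 : ((2:ℝ)^(k+1) * r) ^ b = ((2:ℝ)^b)^(k+1) * r^b := by
      rw [Real.mul_rpow (by positivity) hr0.le, ← Real.rpow_natCast 2 (k+1),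
        ← Real.rpow_mul (by norm_num), mul_comm ((k+1 : ℕ) : ℝ) b,
        Real.rpow_mul (by norm_num : (0:ℝ) ≤ 2) b, Real.rpow_natCast]
    have hw0 : (0:ℝ) ≤ (((2:ℝ)^m)⁻¹)^k := by positivity
    calc (((2:ℝ)^m)⁻¹)^k * (μ (ball x (2^(k+1) * r))).toReal
        ≤ (((2:ℝ)^m)⁻¹)^k * (C * (((2:ℝ)^b)^(k+1) * r^b)) := by
          apply mul_le_mul_of_nonneg_left _ hw0
          rw [← h2]; exact h1
      _ = (C * (2:ℝ)^b * r^b) * τ^k := by rw [hτ, mul_pow]; ring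
  have hsumle : ∑ k ∈ Finset.range K, (((2:ℝ)^m)⁻¹)^k * (μ (ball x (2^(k+1) * r))).toReal
      ≤ (C * (2:ℝ)^b * r^b) * (1/(1-τ)) := by
    calc ∑ k ∈ Finset.range K, (((2:ℝ)^m)⁻¹)^k * (μ (ball x (2^(k+1) * r))).toReal
        ≤ ∑ k ∈ Finset.range K, (C * (2:ℝ)^b * r^b) * τ^k := Finset.sum_le_sum htermk
      _ = (C * (2:ℝ)^b * r^b) * ∑ k ∈ Finset.range K, τ^k := by rw [Finset.mul_sum]
      _ ≤ (C * (2:ℝ)^b * r^b) * (1/(1-τ)) := by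
          apply mul_le_mul_of_nonneg_left _ (by positivity)
          have hgeom : ∑ k ∈ Finset.range K, τ^k = (1 - τ^K)/(1-τ) := by
            rw [geom_sum_eq (ne_of_lt hτ1)]
            rw [div_eq_div_iff (by linarith) (by linarith)]
            ring
          rw [hgeom]
          apply div_le_div_of_nonneg_right _ (by linarith)
          · have : (0:ℝ) ≤ τ^K := le_of_lt (pow_pos hτ0 K)
            linarith
  have htail : (((2:ℝ)^m)⁻¹)^K ≤ (2/ρ)^m * r^b := by
    have hinv : ((2:ℝ)^K)⁻¹ ≤ 2*r/ρ := by
      rw [inv_le_iff_one_le_mul₀ (by positivity)]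
      rw [div_mul_eq_mul_div, le_div_iff₀ hρ0]
      have := h2K'
      rw [div_lt_iff₀ hr0] at this
      calc (1:ℝ) * ρ = ρ := by ring
        _ ≤ 2^(K+1) * r := le_of_lt this
        _ = 2*r*2^K := by ring
    have h1 : (((2:ℝ)^m)⁻¹)^K = (((2:ℝ)^K)⁻¹)^m := by
      rw [← inv_pow, ← inv_pow, ← pow_mul, ← pow_mul, mul_comm]
    have h2 : (((2:ℝ)^K)⁻¹)^m ≤ (2*r/ρ)^m :=
      pow_le_pow_left₀ (by positivity) hinv m
    have h3 : ((2:ℝ)*r/ρ)^m = (2/ρ)^m * r^m := by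
      rw [div_pow, div_pow, mul_pow]; ring
    have h4 : r^m ≤ r^b := by
      have : r ^ (m:ℝ) ≤ r ^ b := Real.rpow_le_rpow_of_exponent_ge hr0 (le_trans hrρ hρ1) hbm.le
      rwa [Real.rpow_natCast] at this
    calc (((2:ℝ)^m)⁻¹)^K = (((2:ℝ)^K)⁻¹)^m := h1
      _ ≤ (2*r/ρ)^m := h2
      _ = (2/ρ)^m * r^m := h3
      _ ≤ (2/ρ)^m * r^b := by
          apply mul_le_mul_of_nonneg_left h4 (by positivity)
  calc convPhi m μ x r ≤ (μ (ball x r)).toReal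
        + ∑ k ∈ Finset.range K, (((2:ℝ)^m)⁻¹)^k * (μ (ball x (2^(k+1) * r))).toReal
        + (((2:ℝ)^m)⁻¹)^K := key
    _ ≤ C * r^b + (C * (2:ℝ)^b * r^b) * (1/(1-τ)) + (2/ρ)^m * r^b := by
        exact add_le_add (add_le_add hterm0 hsumle) htail
    _ = (C + C * (2:ℝ)^b / (1 - τ) + (2/ρ)^m) * r ^ b := by ring

end dyadic


section support
variable {n : ℕ} (μ : Measure (EuclideanSpace ℝ (Fin n)))

lemma ae_mem_measureSupport : ∀ᵐ x ∂μ, x ∈ measureSupport μ := by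
  rw [ae_iff]
  have hset : {x | ¬ x ∈ measureSupport μ}
      = ⋃₀ {U : Set (EuclideanSpace ℝ (Fin n)) | IsOpen U ∧ μ U = 0} := by
    ext x
    simp only [measureSupport, mem_setOf_eq, mem_sUnion, not_forall]
    constructor
    · rintro ⟨U, hU, hxU, hμU⟩
      exact ⟨U, ⟨hU, by simpa using hμU⟩, hxU⟩
    · rintro ⟨U, ⟨hU, hμU⟩, hxU⟩
      exact ⟨U, hU, hxU, by simp [hμU]⟩
  rw [hset]
  obtain ⟨T, hTc, hTsub, hTeq⟩ := TopologicalSpace.isOpen_sUnion_countable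
    {U : Set (EuclideanSpace ℝ (Fin n)) | IsOpen U ∧ μ U = 0} (fun U hU => hU.1)
  rw [← hTeq]
  exact (measure_sUnion_null_iff hTc).mpr (fun U hU => (hTsub hU).2)

lemma measureSupport_ball_pos {x : EuclideanSpace ℝ (Fin n)}
    (hx : x ∈ measureSupport μ) {r : ℝ} (hr : 0 < r) : 0 < μ (ball x r) :=
  hx _ isOpen_ball (mem_ball_self hr)

end support

/-- From a positive limit of ratios, two-sided comparison at small scales. -/
lemma ratio_control {A B : ℝ → ℝ} {l : ℝ} (hl : 0 < l)
    (hB : ∀ σ, 0 < σ → 0 < B σ)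
    (h : Tendsto (fun σ => A σ / B σ) (𝓝[>] (0:ℝ)) (𝓝 l)) :
    ∃ ρ, 0 < ρ ∧ ∀ σ, 0 < σ → σ ≤ ρ → A σ ≤ 2*l * B σ ∧ B σ ≤ (2/l) * A σ := by
  have hev : ∀ᶠ σ in 𝓝[>] (0:ℝ), A σ / B σ ∈ Set.Ioo (l/2) (2*l) :=
    h (Ioo_mem_nhds (by linarith) (by linarith))
  obtain ⟨u, hu, hsub⟩ := mem_nhdsGT_iff_exists_Ioo_subset.mp hev
  refine ⟨u/2, by simpa using hu, fun σ hσ0 hσu => ?_⟩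
  have hσ : σ ∈ Set.Ioo (0:ℝ) u := ⟨hσ0, by simp at hu ⊢; linarith⟩
  obtain ⟨h1, h2⟩ := hsub hσ
  have hBσ := hB σ hσ0
  constructor
  · calc A σ = A σ / B σ * B σ := by field_simp
      _ ≤ 2*l * B σ := by nlinarith
  · have : l/2 * B σ ≤ A σ := by
      calc l/2 * B σ ≤ A σ / B σ * B σ := by nlinarith
        _ = A σ := by field_simp
    rw [div_mul_eq_mul_div, le_div_iff₀ hl]
    nlinarith

/-- Small scales: eventually, statements about `(0, ρ]`. -/
lemma eventually_nhdsWithin_of_forall_small {P : ℝ → Prop} {ρ : ℝ} (hρ : 0 < ρ)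
    (h : ∀ r, 0 < r → r < ρ → P r) : ∀ᶠ r in 𝓝[>] (0:ℝ), P r := by
  filter_upwards [Ioo_mem_nhdsGT_of_mem (Set.mem_Ico.mpr ⟨le_refl (0:ℝ), hρ⟩)] with r hr
  exact h r hr.1 hr.2

lemma exists_forall_small_of_eventually {P : ℝ → Prop}
    (h : ∀ᶠ r in 𝓝[>] (0:ℝ), P r) : ∃ ρ > 0, ∀ r, 0 < r → r < ρ → P r := by
  obtain ⟨u, hu, hsub⟩ := mem_nhdsGT_iff_exists_Ioo_subset.mp h
  exact ⟨u, by simpa using hu, fun r h0 hu' => hsub ⟨h0, hu'⟩⟩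


lemma toReal_measure_le_one {n : ℕ} (μ : Measure (EuclideanSpace ℝ (Fin n)))
    [IsProbabilityMeasure μ] (s : Set (EuclideanSpace ℝ (Fin n))) : (μ s).toReal ≤ 1 := by
  rw [← ENNReal.toReal_one]
  exact ENNReal.toReal_mono (by simp) prob_le_one

lemma toReal_measure_mono {n : ℕ} (μ : Measure (EuclideanSpace ℝ (Fin n)))
    [IsProbabilityMeasure μ] {s t : Set (EuclideanSpace ℝ (Fin n))} (hst : s ⊆ t) :
    (μ s).toReal ≤ (μ t).toReal :=
  ENNReal.toReal_mono (measure_ne_top μ t) (measure_mono hst)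

set_option maxHeartbeats 1000000 in
lemma main_at_x {n : ℕ} {m : ℕ} (hm : 1 ≤ m)
    (μ ν : Measure (EuclideanSpace ℝ (Fin n))) [IsProbabilityMeasure μ] [IsProbabilityMeasure ν]
    (x : EuclideanSpace ℝ (Fin n)) (q : ℝ) (hq : q ≤ 0)
    (hNpos : ∀ σ : ℝ, 0 < σ → 0 < (ν (ball x σ)).toReal)
    (hMpos : ∀ σ : ℝ, 0 < σ → 0 < (μ (ball x σ)).toReal)
    (D : ℝ) (hD1 : 1 ≤ D) (hND : ∀ᵐ y ∂ν, ‖x - y‖ ≤ D) (hMD : ∀ᵐ y ∂μ, ‖x - y‖ ≤ D)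
    (cc ρx : ℝ) (hcc : 1 ≤ cc) (hρx0 : 0 < ρx) (hρx1 : ρx ≤ 1)
    (N : ℕ)
    (hcomp_low : ∀ σ, 0 < σ → σ ≤ ρx →
      (μ (ball x (σ/2))).toReal / cc ≤ (ν (ball x σ)).toReal)
    (hcomp_up : ∀ σ, 0 < σ → σ ≤ ρx →
      (ν (ball x σ)).toReal ≤ cc * (μ (ball x (2*σ))).toReal)
    (hpolyN : ∀ σ, 0 < σ → σ ≤ ρx → σ^N / cc ≤ (ν (ball x σ)).toReal)
    (hpolyM : ∀ σ, 0 < σ → σ ≤ ρx → σ^N / cc ≤ (μ (ball x σ)).toReal)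
    (hyp : alphaBall q μ ν x ≤ (m:ℝ) * (1 - q)) :
    alphaConv q m μ ν x = alphaBall q μ ν x := by
  have hcc0 : (0:ℝ) < cc := lt_of_lt_of_le one_pos hcc
  have hq1 : (0:ℝ) < 1 - q := by linarith
  set g : ℝ → ℝ := fun r =>
    (Real.log (ν (ball x r)).toReal - q * Real.log (μ (ball x r)).toReal) / Real.log r with hgdef
  set h : ℝ → ℝ := fun r =>
    (Real.log (convPhi m ν x r) - q * Real.log (convPhi m μ x r)) / Real.log r with hhdef
  have hBallEq : alphaBall q μ ν x = Filter.liminf g (𝓝[>] (0:ℝ)) := rfl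
  have hConvEq : alphaConv q m μ ν x = Filter.liminf h (𝓝[>] (0:ℝ)) := rfl
  -- E1 : bounds for g
  have hgbnd : ∀ᶠ r in 𝓝[>] (0:ℝ), 0 ≤ g r ∧ g r ≤ (1 - q) * (N + 1) := by
    apply eventually_nhdsWithin_of_forall_small
      (show (0:ℝ) < min ρx (min (1/cc) 1) by positivity)
    intro r hr0 hrlt
    have hrρx : r ≤ ρx := le_of_lt (lt_of_lt_of_le hrlt (min_le_left _ _))
    have hr1 : r < 1 := lt_of_lt_of_le hrlt (le_trans (min_le_right _ _) (min_le_right _ _))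
    have hrcc : r ≤ 1/cc := le_of_lt (lt_of_lt_of_le hrlt
      (le_trans (min_le_right _ _) (min_le_left _ _)))
    have hlogr : Real.log r < 0 := Real.log_neg hr0 hr1
    have hNB := hNpos r hr0
    have hMB := hMpos r hr0
    have hNB1 := toReal_measure_le_one ν (ball x r)
    have hMB1 := toReal_measure_le_one μ (ball x r)
    have hlogN : Real.log (ν (ball x r)).toReal ≤ 0 := Real.log_nonpos hNB.le hNB1
    have hlogM : Real.log (μ (ball x r)).toReal ≤ 0 := Real.log_nonpos hMB.le hMB1
    have hloglow : ∀ Z : ℝ, 0 < Z → r^N / cc ≤ Z →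
        ((N:ℝ) + 1) * Real.log r ≤ Real.log Z := by
      intro Z hZ hZlow
      have h1 : Real.log (r^N / cc) ≤ Real.log Z := Real.log_le_log (by positivity) hZlow
      have h2 : Real.log (r^N / cc) = N * Real.log r - Real.log cc := by
        rw [Real.log_div (by positivity) (ne_of_gt hcc0), Real.log_pow]
      have h3 : Real.log r ≤ - Real.log cc := by
        have := Real.log_le_log hr0 hrcc
        rwa [Real.log_div one_ne_zero (ne_of_gt hcc0), Real.log_one, zero_sub] at this
      have : ((N:ℝ) + 1) * Real.log r ≤ N * Real.log r - Real.log cc := by nlinarith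
      linarith
    have hNlow := hloglow _ hNB (hpolyN r hr0 hrρx)
    have hMlow := hloglow _ hMB (hpolyM r hr0 hrρx)
    constructor
    · rw [div_nonneg_iff]
      refine Or.inr ⟨?_, hlogr.le⟩
      linarith [mul_nonneg (neg_nonneg.2 hq) (neg_nonneg.2 hlogM)]
    · have hnum : (1 - q) * ((N:ℝ)+1) * Real.log r ≤
          Real.log (ν (ball x r)).toReal - q * Real.log (μ (ball x r)).toReal := by
        have hint := mul_le_mul_of_nonneg_left hMlow (neg_nonneg.2 hq)
        linarith [hint, hNlow]
      have := div_le_div_of_nonpos_of_le hlogr.le hnum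
      calc g r ≤ (1 - q) * ((N:ℝ)+1) * Real.log r / Real.log r := this
        _ = (1 - q) * ((N:ℝ)+1) := by
            rw [mul_div_assoc, div_self (ne_of_lt hlogr), mul_one]
  -- E2 : bounds for h
  have hNφpos : ∀ r : ℝ, 0 < r → 0 < convPhi m ν x r := fun r hr =>
    lt_of_lt_of_le (hNpos r hr) (ball_le_convPhi m ν x hr.le)
  have hMφpos : ∀ r : ℝ, 0 < r → 0 < convPhi m μ x r := fun r hr =>
    lt_of_lt_of_le (hMpos r hr) (ball_le_convPhi m μ x hr.le)
  have hhbnd : ∀ᶠ r in 𝓝[>] (0:ℝ), 0 ≤ h r ∧ h r ≤ (1 - q) * (2*(m:ℝ)) := by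
    apply eventually_nhdsWithin_of_forall_small
      (show (0:ℝ) < min (1/D) 1 by positivity)
    intro r hr0 hrlt
    have hr1 : r < 1 := lt_of_lt_of_le hrlt (min_le_right _ _)
    have hrD : r ≤ 1/D := le_of_lt (lt_of_lt_of_le hrlt (min_le_left _ _))
    have hD0 : (0:ℝ) < D := lt_of_lt_of_le one_pos hD1
    have hrD' : r ≤ D := le_trans hrD (by
      rw [div_le_iff₀ hD0]; nlinarith)
    have hlogr : Real.log r < 0 := Real.log_neg hr0 hr1
    have hNφ := hNφpos r hr0
    have hMφ := hMφpos r hr0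
    have hNφ1 := convPhi_le_one m ν x hr0.le
    have hMφ1 := convPhi_le_one m μ x hr0.le
    have hlogrD : Real.log r ≤ - Real.log D := by
      have := Real.log_le_log hr0 hrD
      rwa [Real.log_div one_ne_zero (ne_of_gt hD0), Real.log_one, zero_sub] at this
    have hloglow : ∀ Z : ℝ, 0 < Z → (r/D)^m ≤ Z →
        ((2*m:ℕ):ℝ) * Real.log r ≤ Real.log Z := by
      intro Z hZ hZlow
      have h1 : Real.log ((r/D)^m) ≤ Real.log Z := Real.log_le_log (by positivity) hZlow
      have h2 : Real.log ((r/D)^m) = m * (Real.log r - Real.log D) := by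
        rw [Real.log_pow, Real.log_div (ne_of_gt hr0) (ne_of_gt hD0)]
      have hm' : (1:ℝ) ≤ (m:ℝ) := by exact_mod_cast hm
      have : ((2*m:ℕ):ℝ) * Real.log r ≤ (m:ℝ) * (Real.log r - Real.log D) := by
        push_cast
        nlinarith
      linarith
    have hNlow := hloglow _ hNφ (convPhi_pos m ν x hD0 hND hr0 hrD')
    have hMlow := hloglow _ hMφ (convPhi_pos m μ x hD0 hMD hr0 hrD')
    have hlogN : Real.log (convPhi m ν x r) ≤ 0 := Real.log_nonpos hNφ.le hNφ1
    have hlogM : Real.log (convPhi m μ x r) ≤ 0 := Real.log_nonpos hMφ.le hMφ1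
    constructor
    · rw [div_nonneg_iff]
      refine Or.inr ⟨?_, hlogr.le⟩
      linarith [mul_nonneg (neg_nonneg.2 hq) (neg_nonneg.2 hlogM)]
    · have hnum : (1 - q) * (2*(m:ℝ)) * Real.log r ≤
          Real.log (convPhi m ν x r) - q * Real.log (convPhi m μ x r) := by
        push_cast at hNlow hMlow
        have hint := mul_le_mul_of_nonneg_left hMlow (neg_nonneg.2 hq)
        linarith [hint, hNlow]
      have := div_le_div_of_nonpos_of_le hlogr.le hnum
      calc h r ≤ (1 - q) * (2*(m:ℝ)) * Real.log r / Real.log r := this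
        _ = (1 - q) * (2*(m:ℝ)) := by
            rw [mul_div_assoc, div_self (ne_of_lt hlogr), mul_one]
  -- E3 : h ≤ g at small scales
  have hstep1 : ∀ᶠ r in 𝓝[>] (0:ℝ), h r ≤ g r := by
    apply eventually_nhdsWithin_of_forall_small one_pos
    intro r hr0 hr1
    have hlogr : Real.log r < 0 := Real.log_neg hr0 hr1
    have h1 : Real.log (ν (ball x r)).toReal ≤ Real.log (convPhi m ν x r) :=
      Real.log_le_log (hNpos r hr0) (ball_le_convPhi m ν x hr0.le)
    have h2 : Real.log (μ (ball x r)).toReal ≤ Real.log (convPhi m μ x r) :=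
      Real.log_le_log (hMpos r hr0) (ball_le_convPhi m μ x hr0.le)
    have h3 : (-q) * Real.log (μ (ball x r)).toReal ≤ (-q) * Real.log (convPhi m μ x r) :=
      mul_le_mul_of_nonneg_left h2 (by linarith)
    apply div_le_div_of_nonpos_of_le hlogr.le
    linarith [h1, h3]
  -- liminf boundedness facts
  have hbg : IsBoundedUnder (· ≥ ·) (𝓝[>] (0:ℝ)) g :=
    ⟨0, eventually_map.mpr (hgbnd.mono fun r hr => hr.1)⟩
  have hbh : IsBoundedUnder (· ≥ ·) (𝓝[>] (0:ℝ)) h :=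
    ⟨0, eventually_map.mpr (hhbnd.mono fun r hr => hr.1)⟩
  have hcg : IsCoboundedUnder (· ≥ ·) (𝓝[>] (0:ℝ)) g :=
    isCoboundedUnder_ge_of_eventually_le _ (hgbnd.mono fun r hr => hr.2)
  have hch : IsCoboundedUnder (· ≥ ·) (𝓝[>] (0:ℝ)) h :=
    isCoboundedUnder_ge_of_eventually_le _ (hhbnd.mono fun r hr => hr.2)
  rw [hBallEq, hConvEq]
  have d1 : Filter.liminf h (𝓝[>] (0:ℝ)) ≤ Filter.liminf g (𝓝[>] (0:ℝ)) :=
    liminf_le_liminf hstep1 hbh hcg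
  -- CLAIM : for every c < liminf g, eventually c ≤ h r
  have claim : ∀ c, c < Filter.liminf g (𝓝[>] (0:ℝ)) → ∀ᶠ r in 𝓝[>] (0:ℝ), c ≤ h r := by
    intro c hc
    rcases le_or_gt c 0 with hc0 | hc0
    · exact hhbnd.mono fun r hr => le_trans hc0 hr.1
    · set A := Filter.liminf g (𝓝[>] (0:ℝ)) with hA
      have hypA : A ≤ (m:ℝ) * (1 - q) := hyp
      set a' := (c + A)/2 with ha'
      have hca' : c < a' := by rw [ha']; linarith
      have ha'A : a' < A := by rw [ha']; linarith
      have ha'0 : 0 < a' := lt_trans hc0 hca'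
      have ha'm : a' < (m:ℝ) * (1 - q) := lt_of_lt_of_le ha'A hypA
      set b := a'/(1-q) with hb
      have hb0 : 0 < b := div_pos ha'0 hq1
      have hbm : b < m := by rw [hb, div_lt_iff₀ hq1]; linarith
      have hba' : b * (1-q) = a' := by rw [hb]; field_simp
      have hev : ∀ᶠ r in 𝓝[>] (0:ℝ), a' < g r := eventually_lt_of_lt_liminf ha'A hbg
      obtain ⟨ρ1, hρ10, hρ1P⟩ := exists_forall_small_of_eventually hev
      set ρ2 := min ρ1 (min ρx 1) with hρ2
      have hρ20 : 0 < ρ2 := by positivity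
      have hρ21 : ρ2 ≤ 1 := le_trans (min_le_right _ _) (min_le_right _ _)
      have hρ2ρx : ρ2 ≤ ρx := le_trans (min_le_right _ _) (min_le_left _ _)
      have hρ2ρ1 : ρ2 ≤ ρ1 := min_le_left _ _
      set β := (a' * Real.log 2 + Real.log cc)/(1-q) with hβ
      have hMBb : ∀ σ, 0 < σ → σ < ρ2/2 →
          (μ (ball x σ)).toReal ≤ Real.exp β * σ ^ b := by
        intro σ hσ0 hσρ
        have hρ0 : (0:ℝ) < 2*σ := by linarith
        have hρlt : 2*σ < ρ2 := by linarith
        have h2σρx : 2*σ ≤ ρx := le_trans hρlt.le hρ2ρx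
        have h2σ1 : 2*σ < 1 := lt_of_lt_of_le hρlt hρ21
        have hlogρ : Real.log (2*σ) < 0 := Real.log_neg hρ0 h2σ1
        have hgρ : a' < g (2*σ) := hρ1P _ hρ0 (lt_of_lt_of_le hρlt hρ2ρ1)
        have hnum : Real.log (ν (ball x (2*σ))).toReal
            - q * Real.log (μ (ball x (2*σ))).toReal ≤ a' * Real.log (2*σ) :=
          (le_div_iff_of_neg hlogρ).mp hgρ.le
        have hMσ := hMpos σ hσ0
        have hlow := hcomp_low (2*σ) hρ0 h2σρx
        rw [show (2*σ/2 : ℝ) = σ by ring] at hlow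
        have hl1 : Real.log (μ (ball x σ)).toReal - Real.log cc
            ≤ Real.log (ν (ball x (2*σ))).toReal := by
          have := Real.log_le_log (by positivity) hlow
          rwa [Real.log_div (ne_of_gt hMσ) (ne_of_gt hcc0)] at this
        have hl2 : Real.log (μ (ball x σ)).toReal ≤ Real.log (μ (ball x (2*σ))).toReal :=
          Real.log_le_log hMσ (toReal_measure_mono μ (ball_subset_ball (by linarith)))
        have hl3 : (1-q) * Real.log (μ (ball x σ)).toReal
            ≤ a' * Real.log (2*σ) + Real.log cc := by
          have hint := mul_le_mul_of_nonneg_left hl2 (neg_nonneg.2 hq)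
          linarith [hnum, hl1, hint]
        have hl4 : Real.log (μ (ball x σ)).toReal ≤ β + b * Real.log σ := by
          have hlog2σ : Real.log (2*σ) = Real.log 2 + Real.log σ :=
            Real.log_mul two_ne_zero (ne_of_gt hσ0)
          have h9 : (1-q) * Real.log (μ (ball x σ)).toReal
              ≤ (a' * Real.log 2 + Real.log cc) + a' * Real.log σ := by
            rw [hlog2σ] at hl3; linarith
          calc Real.log (μ (ball x σ)).toReal
              = ((1-q) * Real.log (μ (ball x σ)).toReal)/(1-q) := by field_simp
            _ ≤ ((a' * Real.log 2 + Real.log cc) + a' * Real.log σ)/(1-q) := by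
                gcongr
            _ = β + b * Real.log σ := by rw [hβ, hb]; ring
        calc (μ (ball x σ)).toReal
            = Real.exp (Real.log (μ (ball x σ)).toReal) := (Real.exp_log hMσ).symm
          _ ≤ Real.exp (β + b * Real.log σ) := Real.exp_le_exp.mpr hl4
          _ = Real.exp β * σ ^ b := by
              rw [Real.exp_add, Real.rpow_def_of_pos hσ0, mul_comm (Real.log σ) b]
      have hNBb : ∀ σ, 0 < σ → σ < ρ2/4 →
          (ν (ball x σ)).toReal ≤ cc * (Real.exp β * (2:ℝ)^b) * σ ^ b := by
        intro σ hσ0 hσρ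
        have hσρx : σ ≤ ρx := by
          have : σ < ρ2 := by linarith
          linarith [hρ2ρx]
        have h2σ : (0:ℝ) < 2*σ := by linarith
        have hup := hcomp_up σ hσ0 hσρx
        have hM2σ := hMBb (2*σ) h2σ (by linarith)
        have h2σb : ((2:ℝ)*σ) ^ b = (2:ℝ)^b * σ^b := Real.mul_rpow (by norm_num) hσ0.le
        calc (ν (ball x σ)).toReal ≤ cc * (μ (ball x (2*σ))).toReal := hup
          _ ≤ cc * (Real.exp β * ((2*σ) ^ b)) := by
              apply mul_le_mul_of_nonneg_left _ hcc0.le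
              exact hM2σ
          _ = cc * (Real.exp β * (2:ℝ)^b) * σ ^ b := by rw [h2σb]; ring
      set Cb := max 1 (cc * (Real.exp β * (2:ℝ)^b) + Real.exp β) with hCb
      have hCb1 : 1 ≤ Cb := le_max_left _ _
      have hexpb : (0:ℝ) < Real.exp β := Real.exp_pos _
      have h2b : (0:ℝ) < (2:ℝ)^b := Real.rpow_pos_of_pos (by norm_num) b
      have hMball : ∀ σ, 0 < σ → σ ≤ ρ2/8 → (μ (ball x σ)).toReal ≤ Cb * σ ^ b := by
        intro σ hσ0 hσρ
        have h1 := hMBb σ hσ0 (by linarith)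
        have h2 : Real.exp β ≤ Cb :=
          le_trans (le_add_of_nonneg_left (by positivity)) (le_max_right _ _)
        calc (μ (ball x σ)).toReal ≤ Real.exp β * σ ^ b := h1
          _ ≤ Cb * σ ^ b :=
              mul_le_mul_of_nonneg_right h2 (Real.rpow_nonneg hσ0.le b)
      have hNball : ∀ σ, 0 < σ → σ ≤ ρ2/8 → (ν (ball x σ)).toReal ≤ Cb * σ ^ b := by
        intro σ hσ0 hσρ
        have h1 := hNBb σ hσ0 (by linarith)
        have h2 : cc * (Real.exp β * (2:ℝ)^b) ≤ Cb :=
          le_trans (le_add_of_nonneg_right hexpb.le) (le_max_right _ _)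
        calc (ν (ball x σ)).toReal ≤ cc * (Real.exp β * (2:ℝ)^b) * σ ^ b := h1
          _ ≤ Cb * σ ^ b :=
              mul_le_mul_of_nonneg_right h2 (Real.rpow_nonneg hσ0.le b)
      obtain ⟨C'μ, hC'μ1, hC'μb⟩ := convPhi_le_of_ball_bound (μ := μ) (x := x)
        hb0.le hbm hCb1 (show (0:ℝ) < ρ2/8 by positivity) (by linarith) hMball
      obtain ⟨C'ν, hC'ν1, hC'νb⟩ := convPhi_le_of_ball_bound (μ := ν) (x := x)
        hb0.le hbm hCb1 (show (0:ℝ) < ρ2/8 by positivity) (by linarith) hNball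
      set C' := max C'μ C'ν with hC'
      have hC'1 : (1:ℝ) ≤ C' := le_trans hC'μ1 (le_max_left _ _)
      have hC'0 : (0:ℝ) < C' := lt_of_lt_of_le one_pos hC'1
      have hlogC' : 0 ≤ Real.log C' := Real.log_nonneg hC'1
      have hac' : (0:ℝ) < a' - c := by linarith
      set r4 := min (ρ2/8) (Real.exp (-((1-q) * Real.log C') / (a' - c))) with hr4
      have hr40 : 0 < r4 := lt_min (by positivity) (Real.exp_pos _)
      apply eventually_nhdsWithin_of_forall_small hr40
      intro r hr0 hrlt
      have hrρ : r ≤ ρ2/8 := le_of_lt (lt_of_lt_of_le hrlt (min_le_left _ _))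
      have hr1 : r < 1 := lt_of_le_of_lt hrρ (by linarith)
      have hlogr : Real.log r < 0 := Real.log_neg hr0 hr1
      have hNφ := hNφpos r hr0
      have hMφ := hMφpos r hr0
      have hrb0 : (0:ℝ) < r ^ b := Real.rpow_pos_of_pos hr0 b
      have hNφb : convPhi m ν x r ≤ C' * r ^ b :=
        le_trans (hC'νb r hr0 hrρ)
          (mul_le_mul_of_nonneg_right (le_max_right _ _) hrb0.le)
      have hMφb : convPhi m μ x r ≤ C' * r ^ b :=
        le_trans (hC'μb r hr0 hrρ)
          (mul_le_mul_of_nonneg_right (le_max_left _ _) hrb0.le)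
      have hlogNφ : Real.log (convPhi m ν x r) ≤ Real.log C' + b * Real.log r := by
        have := Real.log_le_log hNφ hNφb
        rwa [Real.log_mul (ne_of_gt hC'0) (ne_of_gt hrb0), Real.log_rpow hr0] at this
      have hlogMφ : Real.log (convPhi m μ x r) ≤ Real.log C' + b * Real.log r := by
        have := Real.log_le_log hMφ hMφb
        rwa [Real.log_mul (ne_of_gt hC'0) (ne_of_gt hrb0), Real.log_rpow hr0] at this
      have hlogr4 : Real.log r ≤ -((1-q) * Real.log C') / (a' - c) := by
        have h1 : r ≤ Real.exp (-((1-q) * Real.log C') / (a' - c)) :=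
          le_of_lt (lt_of_lt_of_le hrlt (min_le_right _ _))
        have h2 := Real.log_le_log hr0 h1
        rwa [Real.log_exp] at h2
      have hnum : Real.log (convPhi m ν x r) - q * Real.log (convPhi m μ x r)
          ≤ c * Real.log r := by
        have h5 : Real.log (convPhi m ν x r) - q * Real.log (convPhi m μ x r)
            ≤ (1-q) * Real.log C' + a' * Real.log r := by
          have hint := mul_le_mul_of_nonneg_left hlogMφ (neg_nonneg.2 hq)
          have hba'r : b * (1-q) * Real.log r = a' * Real.log r := by rw [hba']
          linarith [hlogNφ, hint, hba'r]
        have h6 : (1-q) * Real.log C' ≤ (c - a') * Real.log r := by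
          have h7 : (c - a') * (-((1-q) * Real.log C') / (a' - c)) ≤ (c - a') * Real.log r :=
            mul_le_mul_of_nonpos_left hlogr4 (by linarith)
          have h8 : (c - a') * (-((1-q) * Real.log C') / (a' - c)) = (1-q) * Real.log C' := by
            field_simp
            ring
          linarith
        linarith
      exact (le_div_iff_of_neg hlogr).mpr hnum
  have d2 : Filter.liminf g (𝓝[>] (0:ℝ)) ≤ Filter.liminf h (𝓝[>] (0:ℝ)) :=
    le_of_forall_lt_imp_le_of_dense fun c hc => le_liminf_of_le hch (claim c hc)
  exact le_antisymm d1 d2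


set_option maxHeartbeats 1000000 in
theorem stmt_15 (n m : ℕ) (hm : 1 ≤ m) (hmn : m < n) (s : ℝ) (hs : 0 < s) (hsm : s ≤ m)
    (μ : Measure (EuclideanSpace ℝ (Fin n))) [IsProbabilityMeasure μ]
    (hμcompact : IsCompact (measureSupport μ))
    (F : Set (EuclideanSpace ℝ (Fin n))) (hF : IsAhlforsRegular s F)
    (hμsupp : measureSupport μ ⊆ F)
    (ν : Measure (EuclideanSpace ℝ (Fin n))) [IsProbabilityMeasure ν]
    (hνcompact : IsCompact (measureSupport ν))
    (hνsupp : measureSupport ν ⊆ measureSupport μ)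
    (hac : ν ≪ μ) (q : ℝ) (hq : q ≤ 0) :
    ∀ᵐ x ∂ν, alphaBall q μ ν x ≤ (m : ℝ) * (1 - q) →
      alphaConv q m μ ν x = alphaBall q μ ν x := by

  -- global boundedness of the supports
  obtain ⟨R, hR⟩ := hμcompact.isBounded.subset_closedBall (0 : EuclideanSpace ℝ (Fin n))
  -- a.e. facts
  have hmemν : ∀ᵐ x ∂ν, x ∈ measureSupport ν := ae_mem_measureSupport ν
  have haeν_le : ae ν ≤ ae μ := hac.ae_le
  have htend1 : ∀ᵐ x ∂ν, Tendsto (fun r => ν (closedBall x r) / μ (closedBall x r))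
      (𝓝[>] (0:ℝ)) (𝓝 (ν.rnDeriv μ x)) :=
    haeν_le (Besicovitch.ae_tendsto_rnDeriv ν μ)
  have hpos1 : ∀ᵐ x ∂ν, 0 < ν.rnDeriv μ x := by
    haveI : ν.HaveLebesgueDecomposition μ := Measure.haveLebesgueDecomposition_of_finiteMeasure
    exact Measure.rnDeriv_pos hac
  have hfin1 : ∀ᵐ x ∂ν, ν.rnDeriv μ x < ∞ := haeν_le (Measure.rnDeriv_lt_top ν μ)
  have htend2 : ∀ᵐ x ∂ν, Tendsto (fun r => volume (closedBall x r) / ν (closedBall x r))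
      (𝓝[>] (0:ℝ)) (𝓝 ((volume : Measure (EuclideanSpace ℝ (Fin n))).rnDeriv ν x)) :=
    Besicovitch.ae_tendsto_rnDeriv volume ν
  have hfin2 : ∀ᵐ x ∂ν, (volume : Measure (EuclideanSpace ℝ (Fin n))).rnDeriv ν x < ∞ :=
    Measure.rnDeriv_lt_top volume ν
  -- the diameter bound
  set D : ℝ := max (2*R) 1 with hD
  have hD1 : (1:ℝ) ≤ D := le_max_right _ _
  have hMD : ∀ᵐ y ∂μ, ∀ x ∈ measureSupport μ, ‖x - y‖ ≤ D := by
    filter_upwards [ae_mem_measureSupport μ] with y hy x hx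
    have h1 : ‖x‖ ≤ R := by simpa [mem_closedBall, dist_eq_norm] using hR hx
    have h2 : ‖y‖ ≤ R := by simpa [mem_closedBall, dist_eq_norm] using hR hy
    calc ‖x - y‖ ≤ ‖x‖ + ‖y‖ := norm_sub_le _ _
      _ ≤ 2*R := by linarith
      _ ≤ D := le_max_left _ _
  -- unit ball volume
  set v1 : ℝ := ((volume : Measure (EuclideanSpace ℝ (Fin n)))
    (closedBall (0 : EuclideanSpace ℝ (Fin n)) 1)).toReal with hv1
  have hv1pos : 0 < v1 := by
    rw [hv1]
    refine ENNReal.toReal_pos (ne_of_gt ?_) (ne_of_lt measure_closedBall_lt_top)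
    exact lt_of_lt_of_le (measure_ball_pos volume _ one_pos) (measure_mono ball_subset_closedBall)
  have hvol : ∀ (x : EuclideanSpace ℝ (Fin n)) (σ : ℝ), 0 ≤ σ →
      ((volume : Measure (EuclideanSpace ℝ (Fin n))) (closedBall x σ)).toReal = σ^n * v1 := by
    intro x σ hσ
    rw [Measure.addHaar_closedBall' volume x hσ, ENNReal.toReal_mul,
      ENNReal.toReal_ofReal (by positivity), finrank_euclideanSpace_fin]
  filter_upwards [hmemν, htend1, hpos1, hfin1, htend2, hfin2] with x hxν hx1 hx1pos hx1fin hx2 hx2fin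
  intro hyp
  -- basic positivity at x
  have hxμ : x ∈ measureSupport μ := hνsupp hxν
  have hNpos : ∀ σ : ℝ, 0 < σ → 0 < (ν (ball x σ)).toReal := fun σ hσ =>
    ENNReal.toReal_pos (ne_of_gt (measureSupport_ball_pos ν hxν hσ)) (measure_ne_top ν _)
  have hMpos : ∀ σ : ℝ, 0 < σ → 0 < (μ (ball x σ)).toReal := fun σ hσ =>
    ENNReal.toReal_pos (ne_of_gt (measureSupport_ball_pos μ hxμ hσ)) (measure_ne_top μ _)
  have hNcBpos : ∀ σ : ℝ, 0 < σ → 0 < (ν (closedBall x σ)).toReal := fun σ hσ =>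
    lt_of_lt_of_le (hNpos σ hσ) (toReal_measure_mono ν ball_subset_closedBall)
  have hMcBpos : ∀ σ : ℝ, 0 < σ → 0 < (μ (closedBall x σ)).toReal := fun σ hσ =>
    lt_of_lt_of_le (hMpos σ hσ) (toReal_measure_mono μ ball_subset_closedBall)
  -- real-valued ratio limits
  set l : ℝ := (ν.rnDeriv μ x).toReal with hl
  have hl0 : 0 < l := ENNReal.toReal_pos (ne_of_gt hx1pos) (ne_of_lt hx1fin)
  have hreal1 : Tendsto (fun σ => (ν (closedBall x σ)).toReal / (μ (closedBall x σ)).toReal)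
      (𝓝[>] (0:ℝ)) (𝓝 l) := by
    have := (ENNReal.tendsto_toReal (ne_of_lt hx1fin)).comp hx1
    simpa only [Function.comp_def, ENNReal.toReal_div] using this
  obtain ⟨ρa, hρa0, hρaP⟩ := ratio_control hl0 hMcBpos hreal1
  set l2 : ℝ := ((volume : Measure (EuclideanSpace ℝ (Fin n))).rnDeriv ν x).toReal with hl2
  have hl2nn : 0 ≤ l2 := ENNReal.toReal_nonneg
  have hreal2 : Tendsto (fun σ =>
      ((volume : Measure (EuclideanSpace ℝ (Fin n))) (closedBall x σ)).toReal
        / (ν (closedBall x σ)).toReal) (𝓝[>] (0:ℝ)) (𝓝 l2) := by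
    have := (ENNReal.tendsto_toReal (ne_of_lt hx2fin)).comp hx2
    simpa only [Function.comp_def, ENNReal.toReal_div] using this
  have hev2 : ∀ᶠ σ in 𝓝[>] (0:ℝ),
      ((volume : Measure (EuclideanSpace ℝ (Fin n))) (closedBall x σ)).toReal
        / (ν (closedBall x σ)).toReal < l2 + 1 :=
    hreal2 (Iio_mem_nhds (lt_add_one l2))
  obtain ⟨ρb, hρb0, hρbP⟩ := exists_forall_small_of_eventually hev2
  have hvollow : ∀ σ : ℝ, 0 < σ → σ < ρb →
      σ^n * v1 ≤ (l2 + 1) * (ν (closedBall x σ)).toReal := by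
    intro σ hσ0 hσρ
    have h1 := hρbP σ hσ0 hσρ
    have h2 := hNcBpos σ hσ0
    rw [div_lt_iff₀ h2] at h1
    rw [← hvol x σ hσ0.le]
    nlinarith
  -- constants
  set K1 : ℝ := 2/l with hK1
  set K2 : ℝ := 2*l with hK2
  set K3 : ℝ := 2^n * (l2+1) / v1 with hK3
  set K4 : ℝ := K2 * K3 with hK4
  have hK10 : 0 < K1 := by positivity
  have hK20 : 0 < K2 := by positivity
  have hK30 : 0 < K3 := by positivity
  have hK40 : 0 < K4 := by positivity
  set cc : ℝ := max (max (max K1 K2) (max K3 K4)) 1 with hcc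
  have hcc1 : (1:ℝ) ≤ cc := le_max_right _ _
  have hccK1 : K1 ≤ cc := le_trans (le_trans (le_max_left _ _) (le_max_left _ _)) (le_max_left _ _)
  have hccK2 : K2 ≤ cc := le_trans (le_trans (le_max_right _ _) (le_max_left _ _)) (le_max_left _ _)
  have hccK3 : K3 ≤ cc := le_trans (le_trans (le_max_left _ _) (le_max_right _ _)) (le_max_left _ _)
  have hccK4 : K4 ≤ cc := le_trans (le_trans (le_max_right _ _) (le_max_right _ _)) (le_max_left _ _)
  set ρx : ℝ := min (min ρa ρb) 1 with hρx
  have hρx0 : 0 < ρx := by positivity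
  have hρx1 : ρx ≤ 1 := min_le_right _ _
  have hρxa : ρx ≤ ρa := le_trans (min_le_left _ _) (min_le_left _ _)
  have hρxb : ρx ≤ ρb := le_trans (min_le_left _ _) (min_le_right _ _)
  -- the four ball estimates
  have hcomp_low : ∀ σ, 0 < σ → σ ≤ ρx →
      (μ (ball x (σ/2))).toReal / cc ≤ (ν (ball x σ)).toReal := by
    intro σ hσ0 hσρ
    have hhalf : 0 < σ/2 := by linarith
    have hhalfρa : σ/2 ≤ ρa := by linarith [le_trans hσρ hρxa]
    have h1 : (μ (closedBall x (σ/2))).toReal ≤ K1 * (ν (closedBall x (σ/2))).toReal := by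
      have := (hρaP (σ/2) hhalf hhalfρa).2
      rw [hK1]
      linarith
    have h2 : (ν (closedBall x (σ/2))).toReal ≤ (ν (ball x σ)).toReal :=
      toReal_measure_mono ν (closedBall_subset_ball (by linarith))
    have h3 : (μ (ball x (σ/2))).toReal ≤ K1 * (ν (ball x σ)).toReal := by
      calc (μ (ball x (σ/2))).toReal ≤ (μ (closedBall x (σ/2))).toReal :=
            toReal_measure_mono μ ball_subset_closedBall
        _ ≤ K1 * (ν (closedBall x (σ/2))).toReal := h1
        _ ≤ K1 * (ν (ball x σ)).toReal := mul_le_mul_of_nonneg_left h2 hK10.le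
    calc (μ (ball x (σ/2))).toReal / cc ≤ (μ (ball x (σ/2))).toReal / K1 := by
          gcongr
      _ ≤ (ν (ball x σ)).toReal := by
          rw [div_le_iff₀ hK10]
          linarith [h3]
  have hcomp_up : ∀ σ, 0 < σ → σ ≤ ρx →
      (ν (ball x σ)).toReal ≤ cc * (μ (ball x (2*σ))).toReal := by
    intro σ hσ0 hσρ
    have h1 : (ν (closedBall x σ)).toReal ≤ K2 * (μ (closedBall x σ)).toReal :=
      (hρaP σ hσ0 (le_trans hσρ hρxa)).1
    have h2 : (μ (closedBall x σ)).toReal ≤ (μ (ball x (2*σ))).toReal :=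
      toReal_measure_mono μ (closedBall_subset_ball (by linarith))
    calc (ν (ball x σ)).toReal ≤ (ν (closedBall x σ)).toReal :=
          toReal_measure_mono ν ball_subset_closedBall
      _ ≤ K2 * (μ (closedBall x σ)).toReal := h1
      _ ≤ K2 * (μ (ball x (2*σ))).toReal := mul_le_mul_of_nonneg_left h2 hK20.le
      _ ≤ cc * (μ (ball x (2*σ))).toReal :=
          mul_le_mul_of_nonneg_right hccK2 ENNReal.toReal_nonneg
  have hNlow : ∀ σ : ℝ, 0 < σ → σ ≤ ρx → σ^n / K3 ≤ (ν (closedBall x (σ/2))).toReal := by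
    intro σ hσ0 hσρ
    have hhalf : 0 < σ/2 := by linarith
    have hhalfρb : σ/2 < ρb := by linarith [le_trans hσρ hρxb]
    have h1 := hvollow (σ/2) hhalf hhalfρb
    have h2 : (σ/2)^n = σ^n / 2^n := div_pow σ 2 n
    have h3 : (0:ℝ) < 2^n := by positivity
    rw [div_le_iff₀ hK30, hK3, ← mul_div_assoc, le_div_iff₀ hv1pos]
    rw [h2, div_mul_eq_mul_div, div_le_iff₀ h3] at h1
    linarith [h1]
  have hpolyN : ∀ σ, 0 < σ → σ ≤ ρx → σ^n / cc ≤ (ν (ball x σ)).toReal := by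
    intro σ hσ0 hσρ
    have h1 := hNlow σ hσ0 hσρ
    have h2 : (ν (closedBall x (σ/2))).toReal ≤ (ν (ball x σ)).toReal :=
      toReal_measure_mono ν (closedBall_subset_ball (by linarith))
    calc σ^n / cc ≤ σ^n / K3 := by gcongr
      _ ≤ (ν (ball x σ)).toReal := le_trans h1 h2
  have hpolyM : ∀ σ, 0 < σ → σ ≤ ρx → σ^n / cc ≤ (μ (ball x σ)).toReal := by
    intro σ hσ0 hσρ
    have hhalf : 0 < σ/2 := by linarith
    have h1 := hNlow σ hσ0 hσρ
    have h2 : (ν (closedBall x (σ/2))).toReal ≤ K2 * (μ (closedBall x (σ/2))).toReal :=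
      (hρaP (σ/2) hhalf (by linarith [le_trans hσρ hρxa])).1
    have h3 : (μ (closedBall x (σ/2))).toReal ≤ (μ (ball x σ)).toReal :=
      toReal_measure_mono μ (closedBall_subset_ball (by linarith))
    have h4 : σ^n / K4 ≤ (μ (ball x σ)).toReal := by
      rw [hK4, div_le_iff₀ (by positivity)]
      rw [div_le_iff₀ hK30] at h1
      calc σ^n ≤ (ν (closedBall x (σ/2))).toReal * K3 := h1
        _ ≤ K2 * (μ (closedBall x (σ/2))).toReal * K3 :=
            mul_le_mul_of_nonneg_right h2 hK30.le
        _ ≤ K2 * (μ (ball x σ)).toReal * K3 := by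
            have := mul_le_mul_of_nonneg_left h3 hK20.le
            nlinarith [hK30.le]
        _ = (μ (ball x σ)).toReal * (K2 * K3) := by ring
    calc σ^n / cc ≤ σ^n / K4 := by gcongr
      _ ≤ (μ (ball x σ)).toReal := h4
  -- diameter facts at x
  have hND' : ∀ᵐ y ∂ν, ‖x - y‖ ≤ D := by
    filter_upwards [hMD.filter_mono haeν_le] with y hy
    exact hy x hxμ
  have hMD' : ∀ᵐ y ∂μ, ‖x - y‖ ≤ D := by
    filter_upwards [hMD] with y hy
    exact hy x hxμ
  exact main_at_x hm μ ν x q hq hNpos hMpos D hD1 hND' hMD' cc ρx hcc1 hρx0 hρx1 n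
    hcomp_low hcomp_up hpolyN hpolyM hyp
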